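/- The symmetric Chamfer distance does not satisfy the merge-monotonicity property enjoyed by the asymmetric Chamfer distance: there exist pairwise disjoint finite nonempty subsets A, B, C of ℝ (with distance d(x, y) = |x − y|) such that Ch_S(C, A ∪ B) > min(Ch_S(C, A), Ch_S(C, B)). Concretely, for C = {0}, A = {1}, B = {100}, one has Ch_S(C, A ∪ B) = 102 while min(Ch_S(C, A), Ch_S(C, B)) = 2. -/
import Mathlib


/-- The Chamfer distance from a finite set `A` to a finite nonempty set `B`:
`Ch(A, B) = Σ_{a ∈ A} min_{b ∈ B} d(a, b)`. -/
noncomputable def chamfer {X : Type*} [MetricSpace X] (A B : Finset X)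
    (hB : B.Nonempty) : ℝ :=
  ∑ a ∈ A, B.inf' hB fun b => dist a b

/-- The symmetric Chamfer distance: `Ch_S(A, B) = Ch(A, B) + Ch(B, A)`. -/
noncomputable def chamferS {X : Type*} [MetricSpace X] (A B : Finset X)
    (hA : A.Nonempty) (hB : B.Nonempty) : ℝ :=
  chamfer A B hB + chamfer B A hA

/-- The symmetric Chamfer distance does not satisfy merge-monotonicity: there are
pairwise disjoint finite nonempty subsets `A`, `B`, `C` of `ℝ` with
`Ch_S(C, A ∪ B) > min (Ch_S(C, A)) (Ch_S(C, B))`.  Concretely, for `C = {0}`, `A = {1}`,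
`B = {100}`, one has `Ch_S(C, A ∪ B) = 102` while
`min (Ch_S(C, A)) (Ch_S(C, B)) = 2`. -/
theorem chamferS_not_merge_monotone :
    (∃ (A B C : Finset ℝ) (hA : A.Nonempty) (hB : B.Nonempty) (hC : C.Nonempty),
      Disjoint A B ∧ Disjoint A C ∧ Disjoint B C ∧
      chamferS C (A ∪ B) hC (hA.inl) > min (chamferS C A hC hA) (chamferS C B hC hB)) ∧
    chamferS ({0} : Finset ℝ) (({1} : Finset ℝ) ∪ ({100} : Finset ℝ))
        (Finset.singleton_nonempty _) ((Finset.singleton_nonempty _).inl) = 102 ∧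
    min (chamferS ({0} : Finset ℝ) ({1} : Finset ℝ)
          (Finset.singleton_nonempty _) (Finset.singleton_nonempty _))
        (chamferS ({0} : Finset ℝ) ({100} : Finset ℝ)
          (Finset.singleton_nonempty _) (Finset.singleton_nonempty _)) = 2 := by
  have key : chamferS ({0} : Finset ℝ) (({1} : Finset ℝ) ∪ ({100} : Finset ℝ))
      (Finset.singleton_nonempty _) ((Finset.singleton_nonempty _).inl) = 102 := by
    have h : ({1} : Finset ℝ) ∪ {100} = {1, 100} := rfl
    simp only [chamferS, chamfer, h]
    rw [Finset.sum_singleton, Finset.sum_insert (by norm_num), Finset.sum_singleton,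
      Finset.inf'_insert]
    · simp [Real.dist_eq]; norm_num
    · exact Finset.singleton_nonempty _
  have h1 : chamferS ({0} : Finset ℝ) ({1} : Finset ℝ)
      (Finset.singleton_nonempty _) (Finset.singleton_nonempty _) = 2 := by
    simp [chamferS, chamfer, Real.dist_eq]; norm_num
  have h2 : chamferS ({0} : Finset ℝ) ({100} : Finset ℝ)
      (Finset.singleton_nonempty _) (Finset.singleton_nonempty _) = 200 := by
    simp [chamferS, chamfer, Real.dist_eq]; norm_num
  have hmin : min (chamferS ({0} : Finset ℝ) ({1} : Finset ℝ)
      (Finset.singleton_nonempty _) (Finset.singleton_nonempty _))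
      (chamferS ({0} : Finset ℝ) ({100} : Finset ℝ)
      (Finset.singleton_nonempty _) (Finset.singleton_nonempty _)) = 2 := by
    rw [h1, h2]; norm_num
  refine ⟨⟨{1}, {100}, {0}, Finset.singleton_nonempty _, Finset.singleton_nonempty _,
    Finset.singleton_nonempty _, Finset.disjoint_singleton.mpr (by norm_num), Finset.disjoint_singleton.mpr (by norm_num), Finset.disjoint_singleton.mpr (by norm_num), ?_⟩, key, hmin⟩
  rw [key, hmin]
  norm_num
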